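/- Let α ≥ 2, β ≥ ω, and κ ≥ ω be cardinals. Then: (a) the space E := (D(α))^{2^β} satisfies d(E_κ) ≤ (α·β)^{<κ}; and (b) the space E' := (D(α))^β satisfies d(E'_κ) ≤ (α·log(β))^{<κ}, where log(β) := min{γ : 2^γ ≥ β}. -/

import Mathlib

open Cardinal TopologicalSpace Set

universe u

/-- The `κ`-box topology on a product of topological spaces: generated by the boxes
`Π i, U i` with each `U i` open and fewer than `κ` coordinates restricted. -/
def boxTopology (κ : Cardinal.{u}) {ι : Type u} (X : ι → Type u)
    [∀ i, TopologicalSpace (X i)] : TopologicalSpace (∀ i, X i) :=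
  TopologicalSpace.generateFrom
    {S | ∃ U : ∀ i, Set (X i), (∀ i, IsOpen (U i)) ∧
      #{i | U i ≠ Set.univ} < κ ∧ S = Set.pi Set.univ U}

/-- The density character of a topological space: the least cardinality of a dense subset
(finite values allowed). -/
noncomputable def dens (X : Type u) [TopologicalSpace X] : Cardinal.{u} :=
  sInf {c | ∃ D : Set X, Dense D ∧ #D = c}

/-- `log β`: the least cardinal `γ` with `2 ^ γ ≥ β`. -/
noncomputable def clog (β : Cardinal.{u}) : Cardinal.{u} :=
  sInf {γ | β ≤ 2 ^ γ}

open Ordinal in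
lemma iio_card_lt (κ : Cardinal.{u}) (t : κ.ord.ToType) : #(Set.Iio t) < κ := by
  have h1 := @Ordinal.card_typein κ.ord.ToType (· < ·) isWellOrder_lt t
  have h2 : @Ordinal.typein κ.ord.ToType (· < ·) isWellOrder_lt t < κ.ord := by
    conv_rhs => rw [← Ordinal.type_toType κ.ord]
    exact @Ordinal.typein_lt_type _ _ isWellOrder_lt t
  have h3 : #(Set.Iio t) = #{ y : κ.ord.ToType // y < t } := rfl
  rw [h3, ← h1]
  exact Cardinal.lt_ord.1 h2

lemma exists_iio_card (κ : Cardinal.{u}) {l : Cardinal.{u}} (hl : l < κ) :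
    ∃ t : κ.ord.ToType, #(Set.Iio t) = l := by
  have h : l.ord < @Ordinal.type κ.ord.ToType (· < ·) isWellOrder_lt := by
    rw [Ordinal.type_toType]; exact Cardinal.ord_lt_ord.2 hl
  obtain ⟨t, ht⟩ := @Ordinal.typein_surj κ.ord.ToType (· < ·) isWellOrder_lt _ h
  refine ⟨t, ?_⟩
  have h1 := @Ordinal.card_typein κ.ord.ToType (· < ·) isWellOrder_lt t
  have h3 : #(Set.Iio t) = #{ y : κ.ord.ToType // y < t } := rfl
  rw [h3, ← h1, ht, Cardinal.card_ord]

lemma boxBasis (κ : Cardinal.{u}) (hκ : ℵ₀ ≤ κ) {ι : Type u} (X : ι → Type u)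
    [∀ i, TopologicalSpace (X i)] :
    @IsTopologicalBasis (∀ i, X i) (boxTopology κ X)
      {S | ∃ U : ∀ i, Set (X i), (∀ i, IsOpen (U i)) ∧
        #{i | U i ≠ Set.univ} < κ ∧ S = Set.pi Set.univ U} := by
  refine @IsTopologicalBasis.mk _ (boxTopology κ X) _ ?_ ?_ rfl
  · rintro S₁ ⟨U, hUo, hUκ, rfl⟩ S₂ ⟨V, hVo, hVκ, rfl⟩ x hx
    refine ⟨_, ⟨fun i => U i ∩ V i, fun i => (hUo i).inter (hVo i), ?_, rfl⟩, ?_, ?_⟩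
    · refine lt_of_le_of_lt ?_ (Cardinal.add_lt_of_lt hκ hUκ hVκ)
      refine le_trans (Cardinal.mk_le_mk_of_subset (s := _)
        (t := {i | U i ≠ Set.univ} ∪ {i | V i ≠ Set.univ}) ?_) (Cardinal.mk_union_le _ _)
      intro i hi
      by_contra hc
      simp only [Set.mem_union, Set.mem_setOf_eq, not_or, not_not] at hc
      exact hi (by simp [Set.mem_setOf_eq] at hi ⊢; rw [hc.1, hc.2, Set.univ_inter])
    · rw [Set.pi_inter_distrib]; exact hx
    · rw [Set.pi_inter_distrib]
  · refine Set.eq_univ_of_univ_subset fun x _ => ?_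
    refine ⟨Set.univ, ⟨fun _ => Set.univ, fun _ => isOpen_univ, ?_, by simp⟩, trivial⟩
    simp only [ne_eq, not_true_eq_false, Set.setOf_false, Cardinal.mk_eq_zero]
    exact lt_of_lt_of_le (by simpa using Cardinal.aleph0_pos) hκ

lemma dens_le {X : Type u} [TopologicalSpace X] {D : Set X} (hD : Dense D) : dens X ≤ #D :=
  csInf_le' ⟨D, hD, rfl⟩

lemma dens_exists (X : Type u) [TopologicalSpace X] :
    ∃ D : Set X, Dense D ∧ #D = dens X := by
  have h : Set.Nonempty {c | ∃ D : Set X, Dense D ∧ #D = c} :=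
    ⟨#(Set.univ : Set X), Set.univ, dense_univ, rfl⟩
  exact csInf_mem h

lemma dens_restrict (κ : Cardinal.{u}) (A : Type u) [TopologicalSpace A] [DiscreteTopology A]
    [Nonempty A] {C C' : Type u} (i : C → C') (hi : Function.Injective i) :
    @dens (C → A) (boxTopology κ fun _ => A) ≤
      @dens (C' → A) (boxTopology κ fun _ => A) := by
  classical
  letI t' : TopologicalSpace (C' → A) := boxTopology κ fun _ => A
  letI t : TopologicalSpace (C → A) := boxTopology κ fun _ => A
  set ρ : (C' → A) → (C → A) := fun f c => f (i c) with hρ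
  have hcont : Continuous ρ := by
    apply continuous_generateFrom_iff.2
    rintro S ⟨U, hUo, hUκ, rfl⟩
    set V : C' → Set A := fun c' => {a | ∀ c, i c = c' → a ∈ U c} with hV
    have heq : ρ ⁻¹' (Set.pi Set.univ U) = Set.pi Set.univ V := by
      ext f
      simp only [Set.mem_preimage, Set.mem_pi, Set.mem_univ, forall_true_left, hV,
        Set.mem_setOf_eq]
      constructor
      · rintro h c' c rfl; exact h c
      · intro h c; exact h (i c) c rfl
    rw [heq]
    have : @IsOpen _ (TopologicalSpace.generateFrom
        {S | ∃ U : C' → Set A, (∀ i, IsOpen (U i)) ∧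
          #{i | U i ≠ Set.univ} < κ ∧ S = Set.pi Set.univ U}) (Set.pi Set.univ V) := by
      apply TopologicalSpace.GenerateOpen.basic
      refine ⟨V, fun _ => isOpen_discrete _, ?_, rfl⟩
      refine lt_of_le_of_lt (le_trans (Cardinal.mk_le_mk_of_subset
        (t := i '' {c | U c ≠ Set.univ}) ?_) (Cardinal.mk_image_le)) hUκ
      intro c' hc'
      simp only [Set.mem_setOf_eq, hV] at hc'
      have : ∃ a : A, ¬ ∀ c, i c = c' → a ∈ U c := by
        by_contra hcon
        push_neg at hcon
        exact hc' (Set.eq_univ_of_forall fun a => hcon a)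
      obtain ⟨a, ha⟩ := this
      push_neg at ha
      obtain ⟨c, hc, hcU⟩ := ha
      exact ⟨c, fun h => hcU (h ▸ Set.mem_univ a), hc⟩
    exact this
  have hsurj : Function.Surjective ρ := by
    intro g
    refine ⟨fun c' => if h : ∃ c, i c = c' then g h.choose else Classical.arbitrary A, ?_⟩
    funext c
    have h : ∃ c'', i c'' = i c := ⟨c, rfl⟩
    simp only [hρ, dif_pos h]
    congr 1
    exact hi h.choose_spec
  obtain ⟨D, hD, hDc⟩ := dens_exists (C' → A)
  refine le_trans (le_trans (dens_le ((hsurj.denseRange).dense_image hcont hD)) ?_) hDc.le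
  exact Cardinal.mk_image_le

lemma kappa_le_powerlt {γ κ : Cardinal.{u}} (hγ : 2 ≤ γ) (hκ : ℵ₀ ≤ κ) : κ ≤ γ ^< κ := by
  by_contra hcon
  push_neg at hcon
  have h1 : (2 : Cardinal.{u}) ^ (γ ^< κ) ≤ γ ^ (γ ^< κ) := Cardinal.power_le_power_right hγ
  have h2 : γ ^ (γ ^< κ) ≤ γ ^< κ := Cardinal.le_powerlt γ hcon
  exact absurd ((Cardinal.cantor _).trans_le (h1.trans h2)) (lt_irrefl _)

lemma term_bound {γ κ l₁ l₂ : Cardinal.{u}} (hγ : 2 ≤ γ) (hκ : ℵ₀ ≤ κ)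
    (h1 : l₁ < κ) (h2 : l₂ < κ) {a c : Cardinal.{u}} (ha : a ≤ γ) (hc : c ≤ γ) :
    a ^ l₁ * ((2 ^ l₁) ^ l₂ * c ^ l₂) ≤ γ ^< κ := by
  have key : a ^ l₁ * ((2 ^ l₁) ^ l₂ * c ^ l₂) ≤ γ ^ (l₁ + (l₁ * l₂ + l₂)) := by
    rw [Cardinal.power_add, Cardinal.power_add]
    refine mul_le_mul' (Cardinal.power_le_power_right ha) (mul_le_mul' ?_
      (Cardinal.power_le_power_right hc))
    rw [← Cardinal.power_mul]
    exact Cardinal.power_le_power_right hγ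
  refine key.trans (Cardinal.le_powerlt γ ?_)
  exact Cardinal.add_lt_of_lt hκ h1
    (Cardinal.add_lt_of_lt hκ (Cardinal.mul_lt_of_lt hκ h1 h2) h2)

open scoped Classical in
noncomputable def ptFun (κ : Cardinal.{u}) (A B C : Type u) (a₀ : A) (eC : C ≃ Set B)
    (p : Σ t : κ.ord.ToType × κ.ord.ToType,
      (↥(Set.Iio t.1) → B) × (↥(Set.Iio t.2) → Set ↥(Set.Iio t.1)) × (↥(Set.Iio t.2) → A))
    (c : C) : A :=
  if h : ∃ j, p.2.2.1 j = {j' | p.2.1 j' ∈ eC c} then p.2.2.2 h.choose else a₀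

lemma core (α β κ : Cardinal.{u}) (hα : 2 ≤ α) (hβ : ℵ₀ ≤ β) (hκ : ℵ₀ ≤ κ)
    (A : Type u) [TopologicalSpace A] [DiscreteTopology A] (hA : #A = α)
    (C : Type u) (hC : #C = 2 ^ β) :
    @dens (C → A) (boxTopology κ fun _ => A) ≤ (α * β) ^< κ := by
  classical
  letI tC : TopologicalSpace (C → A) := boxTopology κ fun _ => A
  haveI hAne : Nonempty A := Cardinal.mk_ne_zero_iff.1 (by rw [hA]; intro h; rw [h] at hα; exact absurd hα (by norm_num))
  let a₀ : A := Classical.arbitrary A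
  let B := Quotient.out β
  have hB : #B = β := Cardinal.mk_out β
  haveI hBne : Nonempty B := Cardinal.mk_ne_zero_iff.1 (by rw [hB]; exact (Cardinal.aleph0_pos.trans_le hβ).ne')
  have eC : C ≃ Set B := Classical.choice (Cardinal.eq.1 (by rw [hC, Cardinal.mk_set, hB]))
  set T := κ.ord.ToType with hT
  set P := (Σ t : T × T,
      (↥(Set.Iio t.1) → B) × (↥(Set.Iio t.2) → Set ↥(Set.Iio t.1)) × (↥(Set.Iio t.2) → A))
    with hP
  set D := Set.range (ptFun κ A B C a₀ eC) with hD
  have hdense : Dense D := by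
    refine (boxBasis κ hκ (fun _ : C => A)).dense_iff.2 ?_
    rintro S ⟨U, hUo, hUκ, rfl⟩ hne
    obtain ⟨z, hz⟩ := hne
    rw [Set.mem_pi] at hz
    set J := {c | U c ≠ Set.univ} with hJ
    -- separating elements
    set s : C → C → B := fun c c' =>
      if h : ∃ b, b ∈ eC c ∧ b ∉ eC c' then h.choose else Classical.arbitrary B with hs
    set S₀ : Set B := Set.range (fun q : ↥J × ↥J => s q.1.1 q.2.1) with hS₀
    have hS₀κ : #S₀ < κ := by
      refine Cardinal.mk_range_le.trans_lt ?_
      simp only [Cardinal.mk_prod, Cardinal.lift_id]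
      exact Cardinal.mul_lt_of_lt hκ hUκ hUκ
    have hsep : ∀ c ∈ J, ∀ c' ∈ J, eC c ≠ eC c' →
        ∃ b ∈ S₀, ¬ (b ∈ eC c ↔ b ∈ eC c') := by
      intro c hc c' hc' hne'
      have hex0 : ∃ b, ¬ (b ∈ eC c ↔ b ∈ eC c') := by
        by_contra hcon
        push_neg at hcon
        exact hne' (Set.ext fun b => hcon b)
      obtain ⟨b, hb⟩ := hex0
      rw [not_iff] at hb
      by_cases hb1 : b ∈ eC c
      · have hex : ∃ b', b' ∈ eC c ∧ b' ∉ eC c' := ⟨b, hb1, fun h2 => (hb.2 h2) hb1⟩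
        refine ⟨s c c', ⟨(⟨⟨c, hc⟩, ⟨c', hc'⟩⟩ : ↥J × ↥J), rfl⟩, ?_⟩
        have hspec := hex.choose_spec
        rw [hs]
        simp only [dif_pos hex]
        exact fun hiff => hspec.2 (hiff.1 hspec.1)
      · have hb2 : b ∈ eC c' := hb.1 hb1
        have hex : ∃ b', b' ∈ eC c' ∧ b' ∉ eC c := ⟨b, hb2, hb1⟩
        refine ⟨s c' c, ⟨(⟨⟨c', hc'⟩, ⟨c, hc⟩⟩ : ↥J × ↥J), rfl⟩, ?_⟩
        have hspec := hex.choose_spec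
        rw [hs]
        simp only [dif_pos hex]
        exact fun hiff => hspec.2 (hiff.2 hspec.1)
    obtain ⟨t₁, ht₁⟩ := exists_iio_card κ hS₀κ
    have u' : ↥(Set.Iio t₁) ≃ ↥S₀ := Classical.choice (Cardinal.eq.1 ht₁)
    set u : ↥(Set.Iio t₁) → B := fun j => (u' j).1 with hu
    have huS : ∀ b ∈ S₀, ∃ j, u j = b := fun b hb => ⟨u'.symm ⟨b, hb⟩, by simp [hu]⟩
    set τ : C → Set ↥(Set.Iio t₁) := fun c => {j | u j ∈ eC c} with hτ
    have hτinj : ∀ c ∈ J, ∀ c' ∈ J, τ c = τ c' → c = c' := by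
      intro c hc c' hc' h
      by_contra hne'
      obtain ⟨b, hbS, hbx⟩ := hsep c hc c' hc' (fun he => hne' (eC.injective he))
      obtain ⟨j, rfl⟩ := huS b hbS
      refine hbx ?_
      constructor
      · intro h1
        have : j ∈ τ c := h1
        rw [h] at this
        exact this
      · intro h1
        have : j ∈ τ c' := h1
        rw [← h] at this
        exact this
    obtain ⟨t₂, ht₂⟩ := exists_iio_card κ hUκ
    have w : ↥(Set.Iio t₂) ≃ ↥J := Classical.choice (Cardinal.eq.1 ht₂)
    set p : P := ⟨(t₁, t₂), u, fun j => τ (w j).1, fun j => z (w j).1⟩ with hp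
    refine ⟨ptFun κ A B C a₀ eC p, ?_, Set.mem_range_self p⟩
    rw [Set.mem_pi]
    intro c _
    by_cases hc : c ∈ J
    · have hex : ∃ j : ↥(Set.Iio t₂), τ (w j).1 = {j' | u j' ∈ eC c} :=
        ⟨w.symm ⟨c, hc⟩, by rw [hτ]; simp⟩
      show (if h : ∃ j, _ = _ then _ else _) ∈ U c
      rw [dif_pos hex]
      have hspec := hex.choose_spec
      have hJ2 : (w hex.choose).1 ∈ J := (w hex.choose).2
      have heq : ((w hex.choose) : C) = c := hτinj _ hJ2 _ hc hspec
      show z ((w hex.choose) : C) ∈ U c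
      rw [heq]
      exact hz c (Set.mem_univ c)
    · have : U c = Set.univ := not_not.1 hc
      rw [this]
      exact Set.mem_univ _
  have hαγ : α ≤ α * β := by
    conv_lhs => rw [← mul_one α]
    exact mul_le_mul' le_rfl (Cardinal.one_lt_aleph0.le.trans hβ)
  have hβγ : β ≤ α * β := by
    conv_lhs => rw [← one_mul β]
    exact mul_le_mul' (one_le_two.trans hα) le_rfl
  have hγ : 2 ≤ α * β := hα.trans hαγ
  have hκle : κ ≤ (α * β) ^< κ := kappa_le_powerlt hγ hκ
  have hcard : #D ≤ (α * β) ^< κ := by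
    refine Cardinal.mk_range_le.trans ?_
    have hPc : #P = Cardinal.sum (fun t : T × T =>
        #((↥(Set.Iio t.1) → B) × (↥(Set.Iio t.2) → Set ↥(Set.Iio t.1)) ×
          (↥(Set.Iio t.2) → A))) := Cardinal.mk_sigma _
    have hT2 : #(T × T) = κ := by
      simp only [Cardinal.mk_prod, Cardinal.lift_id, hT, Cardinal.mk_toType, Cardinal.card_ord]
      exact Cardinal.mul_eq_self hκ
    have hsup : ∀ t : T × T,
        #((↥(Set.Iio t.1) → B) × (↥(Set.Iio t.2) → Set ↥(Set.Iio t.1)) ×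
          (↥(Set.Iio t.2) → A)) ≤ (α * β) ^< κ := by
      intro t
      have l1 := iio_card_lt κ t.1
      have l2 := iio_card_lt κ t.2
      simp only [Cardinal.mk_prod, Cardinal.lift_id, Cardinal.mk_arrow, Cardinal.mk_set, hB, hA]
      exact term_bound hγ hκ l1 l2 hβγ hαγ
    refine le_trans (le_of_eq hPc) (le_trans (Cardinal.sum_le_mk_mul_iSup _) ?_)
    rw [hT2]
    refine le_trans (mul_le_mul' hκle (ciSup_le' hsup)) ?_
    exact le_of_eq (Cardinal.mul_eq_self (hκ.trans hκle))
  exact (dens_le hdense).trans hcard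

theorem stmt6 (α β κ : Cardinal.{u}) (hα : 2 ≤ α) (hβ : ℵ₀ ≤ β) (hκ : ℵ₀ ≤ κ)
    (A : Type u) [TopologicalSpace A] [DiscreteTopology A] (hA : #A = α) :
    (∀ C : Type u, #C = 2 ^ β →
      @dens (∀ _ : C, A) (boxTopology κ fun _ => A) ≤ (α * β) ^< κ) ∧
    (∀ C : Type u, #C = β →
      @dens (∀ _ : C, A) (boxTopology κ fun _ => A) ≤ (α * clog β) ^< κ) := by
  constructor
  · intro C hC
    exact core α β κ hα hβ hκ A hA C hC
  · intro C hC
    haveI hAne : Nonempty A := Cardinal.mk_ne_zero_iff.1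
      (by rw [hA]; intro h; rw [h] at hα; exact absurd hα (by norm_num))
    set L := clog β with hLdef
    have hβL : β ≤ 2 ^ L := by
      have hne : Set.Nonempty {γ : Cardinal.{u} | β ≤ 2 ^ γ} := ⟨β, (Cardinal.cantor β).le⟩
      exact csInf_mem hne
    have hL : ℵ₀ ≤ L := by
      by_contra h
      push_neg at h
      have h2 : (2 : Cardinal.{u}) ^ L < ℵ₀ :=
        Cardinal.power_lt_aleph0 (Cardinal.nat_lt_aleph0 2) h
      exact absurd ((hβ.trans hβL).trans_lt h2) (lt_irrefl _)
    set C' := Set (Quotient.out L) with hC'def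
    have hC' : #C' = 2 ^ L := by rw [hC'def, Cardinal.mk_set, Cardinal.mk_out]
    have hinj : Nonempty (C ↪ C') := by
      rw [← Cardinal.le_def, hC, hC']
      exact hβL
    obtain ⟨f⟩ := hinj
    refine le_trans (dens_restrict κ A f f.injective) ?_
    exact core α L κ hα hL hκ A hA C' hC'
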